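/- arXiv:2304.09681 — 3 statements merged into one kernel-verified Lean document; each statement's English description precedes it below -/
import Mathlib

section
/- Let p, q be coprime positive integers with p \geq 2, let t = p/q and let \ell = -2 + t. Then the quotient ring \mathbb{C}[x]/\langle \prod_{r=0}^{p-2}\prod_{s=0}^{q-1}(x + \ell/2 - r + s t) \rangle is isomorphic as a \mathbb{C}-algebra to the product ring \mathbb{C}^{(p-1)q}; in particular it is a semisimple commutative algebra of dimension (p-1)q. -/
set_option synthInstance.maxHeartbeats 1000000
set_option maxHeartbeats 1000000

open Polynomial

/-- For coprime positive integers `p, q` with `p ≥ 2`, `t = p/q` and `ℓ = -2 + t`, the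
twisted Zhu algebra `ℂ[x]/⟨∏_{r=0}^{p-2} ∏_{s=0}^{q-1} (x + ℓ/2 - r + s t)⟩` is isomorphic
as a `ℂ`-algebra to `ℂ^{(p-1)q}`. -/
theorem twisted_zhu_semisimple (p q : ℕ) (hp : 2 ≤ p) (hq : 0 < q)
    (hco : Nat.Coprime p q) :
    Nonempty
      ((Polynomial ℂ ⧸ Ideal.span
          {∏ r ∈ Finset.range (p - 1), ∏ s ∈ Finset.range q,
            (X + C (((-2 : ℂ) + (p : ℂ) / (q : ℂ)) / 2 - (r : ℂ) + (s : ℂ) * ((p : ℂ) / (q : ℂ))))})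
        ≃ₐ[ℂ] (Fin ((p - 1) * q) → ℂ)) := by
  set t : ℂ := (p : ℂ) / (q : ℂ) with ht
  set L : ℂ := (-2 : ℂ) + t with hL
  -- roots
  set c : Fin (p - 1) × Fin q → ℂ := fun i => -(L / 2 - (i.1 : ℂ) + (i.2 : ℂ) * t) with hc
  have hq0 : (q : ℂ) ≠ 0 := Nat.cast_ne_zero.mpr hq.ne'
  have hcinj : Function.Injective c := by
    rintro ⟨r, s⟩ ⟨r', s'⟩ h
    simp only [hc, neg_inj] at h
    have h2 : (r : ℂ) - (r' : ℂ) = ((s : ℂ) - (s' : ℂ)) * t := by linear_combination -h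
    have h3 : ((q : ℤ) * ((r : ℤ) - r') : ℂ) = ((p : ℤ) * ((s : ℤ) - s') : ℂ) := by
      push_cast
      field_simp [ht] at h2 ⊢
      rw [ht] at h2
      field_simp at h2
      linear_combination h2
    have h4 : (q : ℤ) * ((r : ℤ) - r') = (p : ℤ) * ((s : ℤ) - s') := by exact_mod_cast h3
    have hpd : (p : ℤ) ∣ (q : ℤ) * ((r : ℤ) - r') := ⟨_, h4⟩
    have hcop : IsCoprime (p : ℤ) (q : ℤ) := Int.isCoprime_iff_gcd_eq_one.mpr hco
    have hpd2 : (p : ℤ) ∣ ((r : ℤ) - r') := hcop.dvd_of_dvd_mul_left hpd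
    have hrr : (r : ℤ) = r' := by
      have hb : |(r : ℤ) - r'| < p := by
        have h1 : (r : ℕ) < p - 1 := r.2
        have h1' : (r' : ℕ) < p - 1 := r'.2
        rw [abs_lt]
        constructor <;> omega
      have := Int.eq_zero_of_abs_lt_dvd hpd2 hb
      omega
    have hss : (s : ℤ) = s' := by
      have hp0 : (p : ℤ) ≠ 0 := by positivity
      have : (p : ℤ) * ((s : ℤ) - s') = 0 := by rw [← h4, hrr]; ring
      rcases mul_eq_zero.mp this with h | h
      · exact absurd h hp0
      · omega
    ext
    · exact_mod_cast hrr
    · exact_mod_cast hss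
  -- the polynomial as a product of X - C (c i)
  have hprod : (∏ r ∈ Finset.range (p - 1), ∏ s ∈ Finset.range q,
      (X + C (L / 2 - (r : ℂ) + (s : ℂ) * t)))
      = ∏ i : Fin (p - 1) × Fin q, (X - C (c i)) := by
    rw [Fintype.prod_prod_type]
    rw [← Fin.prod_univ_eq_prod_range fun r => ∏ s ∈ Finset.range q,
      (X + C (L / 2 - (r : ℂ) + (s : ℂ) * t))]
    refine Finset.prod_congr rfl fun r _ => ?_
    rw [← Fin.prod_univ_eq_prod_range]
    refine Finset.prod_congr rfl fun s _ => ?_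
    show X + C (L / 2 - (r : ℂ) + (s : ℂ) * t) = X - C (-(L / 2 - (r : ℂ) + (s : ℂ) * t))
    rw [map_neg, sub_neg_eq_add]
  -- pairwise coprime linear factors
  have hcop : Pairwise (Function.onFun IsCoprime fun i => Ideal.span ({X - C (c i)} : Set ℂ[X])) := by
    intro i j hij
    simp only [Function.onFun]
    rw [Ideal.isCoprime_span_singleton_iff]
    exact Polynomial.pairwise_coprime_X_sub_C hcinj hij
  have hspan : Ideal.span {∏ r ∈ Finset.range (p - 1), ∏ s ∈ Finset.range q,
        (X + C (L / 2 - (r : ℂ) + (s : ℂ) * t))}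
      = ⨅ i, Ideal.span ({X - C (c i)} : Set ℂ[X]) := by
    rw [hprod, Ideal.iInf_span_singleton]
    intro i j hij
    exact Polynomial.pairwise_coprime_X_sub_C hcinj hij
  -- CRT ring equiv, upgraded to algebra equiv
  let e1 : (ℂ[X] ⧸ Ideal.span {∏ r ∈ Finset.range (p - 1), ∏ s ∈ Finset.range q,
        (X + C (L / 2 - (r : ℂ) + (s : ℂ) * t))})
      ≃ₐ[ℂ] (ℂ[X] ⧸ ⨅ i, Ideal.span ({X - C (c i)} : Set ℂ[X])) :=
    Ideal.quotientEquivAlgOfEq ℂ hspan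
  let e2r := Ideal.quotientInfRingEquivPiQuotient _ hcop
  let e2 : (ℂ[X] ⧸ ⨅ i, Ideal.span ({X - C (c i)} : Set ℂ[X]))
      ≃ₐ[ℂ] ∀ i : Fin (p - 1) × Fin q, ℂ[X] ⧸ Ideal.span ({X - C (c i)} : Set ℂ[X]) :=
    AlgEquiv.ofRingEquiv (f := e2r) (fun r => rfl)
  let e3 : (∀ i : Fin (p - 1) × Fin q, ℂ[X] ⧸ Ideal.span ({X - C (c i)} : Set ℂ[X]))
      ≃ₐ[ℂ] (Fin (p - 1) × Fin q → ℂ) :=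
    AlgEquiv.piCongrRight fun i => Polynomial.quotientSpanXSubCAlgEquiv (c i)
  let eidx : Fin ((p - 1) * q) ≃ Fin (p - 1) × Fin q := finProdFinEquiv.symm
  let e4 : (Fin (p - 1) × Fin q → ℂ) ≃ₐ[ℂ] (Fin ((p - 1) * q) → ℂ) :=
    AlgEquiv.ofRingEquiv (f := RingEquiv.piCongrLeft' (fun _ => ℂ) eidx.symm) (fun r => rfl)
  exact ⟨e1.trans (e2.trans (e3.trans e4))⟩
end

section
/- Let A be an associative unital \mathbb{C}-algebra with elements T_+, T_-, T_0 satisfying T_0 T_+ - T_+ T_0 = -2T_+, T_0 T_- - T_- T_0 = 2T_-, T_+ T_- - T_- T_+ = T_0, and set G_\alpha = T_- T_+ - \alpha T_0 + \alpha(\alpha+1). Then for every positive integer m: T_-^m T_+^m = G_0 G_1 \cdots G_{m-1} and T_+^m T_-^m = G_{-1} G_{-2} \cdots G_{-m}. -/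
/-- The shifted Casimir-type element `G_α = T₋T₊ - αT₀ + α(α+1)·1`. -/
noncomputable def Gcas {A : Type*} [Ring A] [Algebra ℂ A]
    (Tm Tp T0 : A) (α : ℂ) : A :=
  Tm * Tp - α • T0 + (α * (α + 1)) • (1 : A)

lemma gTp {A : Type*} [Ring A] [Algebra ℂ A] (Tp Tm T0 : A)
    (h1 : T0 * Tp - Tp * T0 = (-2 : ℂ) • Tp)
    (h3 : Tp * Tm - Tm * Tp = T0) (α : ℂ) :
    Gcas Tm Tp T0 α * Tp = Tp * Gcas Tm Tp T0 (α + 1) := by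
  have e1 : T0 * Tp = Tp * T0 + (-2 : ℂ) • Tp := by rw [← h1]; abel
  have e3 : Tm * Tp = Tp * Tm - T0 := by rw [← h3]; abel
  have e1' : ∀ x : A, T0 * (Tp * x) = Tp * (T0 * x) + (-2 : ℂ) • (Tp * x) := fun x => by
    rw [← mul_assoc, e1, add_mul, smul_mul_assoc, mul_assoc]
  have e3' : ∀ x : A, Tm * (Tp * x) = Tp * (Tm * x) - T0 * x := fun x => by
    rw [← mul_assoc, e3, sub_mul, mul_assoc]
  simp only [Gcas, sub_mul, add_mul, mul_sub, mul_add, smul_mul_assoc, mul_smul_comm,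
    one_mul, mul_one, mul_assoc, e1', e3', e1, e3]
  simp only [mul_sub, mul_add, smul_sub, smul_add, mul_smul_comm]
  module

lemma gTm {A : Type*} [Ring A] [Algebra ℂ A] (Tp Tm T0 : A)
    (h2 : T0 * Tm - Tm * T0 = (2 : ℂ) • Tm)
    (h3 : Tp * Tm - Tm * Tp = T0) (α : ℂ) :
    Gcas Tm Tp T0 α * Tm = Tm * Gcas Tm Tp T0 (α - 1) := by
  have e2 : T0 * Tm = Tm * T0 + (2 : ℂ) • Tm := by rw [← h2]; abel
  have e3 : Tp * Tm = Tm * Tp + T0 := by rw [← h3]; abel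
  have e2' : ∀ x : A, T0 * (Tm * x) = Tm * (T0 * x) + (2 : ℂ) • (Tm * x) := fun x => by
    rw [← mul_assoc, e2, add_mul, smul_mul_assoc, mul_assoc]
  have e3' : ∀ x : A, Tp * (Tm * x) = Tm * (Tp * x) + T0 * x := fun x => by
    rw [← mul_assoc, e3, add_mul, mul_assoc]
  simp only [Gcas, sub_mul, add_mul, mul_sub, mul_add, smul_mul_assoc, mul_smul_comm,
    one_mul, mul_one, mul_assoc, e2', e3', e2, e3]
  simp only [mul_sub, mul_add, smul_sub, smul_add, mul_smul_comm]
  module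

lemma gTpPow {A : Type*} [Ring A] [Algebra ℂ A] (Tp Tm T0 : A)
    (h1 : T0 * Tp - Tp * T0 = (-2 : ℂ) • Tp)
    (h3 : Tp * Tm - Tm * Tp = T0) (n : ℕ) (α : ℂ) :
    Gcas Tm Tp T0 α * Tp ^ n = Tp ^ n * Gcas Tm Tp T0 (α + n) := by
  induction n generalizing α with
  | zero => simp
  | succ n ih =>
    rw [pow_succ, ← mul_assoc, ih, mul_assoc, gTp Tp Tm T0 h1 h3, ← mul_assoc, ← pow_succ]
    push_cast; ring_nf

lemma gTmPow {A : Type*} [Ring A] [Algebra ℂ A] (Tp Tm T0 : A)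
    (h2 : T0 * Tm - Tm * T0 = (2 : ℂ) • Tm)
    (h3 : Tp * Tm - Tm * Tp = T0) (n : ℕ) (α : ℂ) :
    Gcas Tm Tp T0 α * Tm ^ n = Tm ^ n * Gcas Tm Tp T0 (α - n) := by
  induction n generalizing α with
  | zero => simp
  | succ n ih =>
    rw [pow_succ, ← mul_assoc, ih, mul_assoc, gTm Tp Tm T0 h2 h3, ← mul_assoc, ← pow_succ]
    push_cast; ring_nf

/-- If `T₀T₊ - T₊T₀ = -2T₊`, `T₀T₋ - T₋T₀ = 2T₋`, `T₊T₋ - T₋T₊ = T₀`, then for every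
positive integer `m`: `T₋ᵐ T₊ᵐ = G₀G₁⋯G_{m-1}` and `T₊ᵐ T₋ᵐ = G₋₁G₋₂⋯G₋ₘ`. -/
theorem Gcas_prod (A : Type*) [Ring A] [Algebra ℂ A] (Tp Tm T0 : A)
    (h1 : T0 * Tp - Tp * T0 = (-2 : ℂ) • Tp)
    (h2 : T0 * Tm - Tm * T0 = (2 : ℂ) • Tm)
    (h3 : Tp * Tm - Tm * Tp = T0) (m : ℕ) (hm : 0 < m) :
    Tm ^ m * Tp ^ m = ((List.range m).map (fun i => Gcas Tm Tp T0 (i : ℂ))).prod ∧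
    Tp ^ m * Tm ^ m = ((List.range m).map (fun i => Gcas Tm Tp T0 (-((i : ℂ) + 1)))).prod := by
  clear hm
  have g0 : Gcas Tm Tp T0 0 = Tm * Tp := by simp [Gcas]
  have gm1 : Gcas Tm Tp T0 (-1) = Tp * Tm := by
    simp only [Gcas]
    rw [← h3]
    simp
  induction m with
  | zero => simp
  | succ m ih =>
    obtain ⟨ihl, ihr⟩ := ih
    constructor
    · rw [pow_succ Tm, pow_succ' Tp, mul_assoc (Tm ^ m), ← mul_assoc Tm, ← g0,
        gTpPow Tp Tm T0 h1 h3, zero_add, ← mul_assoc, ihl]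
      simp [List.range_succ]
    · rw [pow_succ Tp, pow_succ' Tm, mul_assoc (Tp ^ m), ← mul_assoc Tp, ← gm1,
        gTmPow Tp Tm T0 h2 h3, ← mul_assoc, ihr,
        show (-1 - (m:ℂ)) = -((m:ℂ) + 1) by ring]
      simp [List.range_succ]
end

section
/- Let L = sl_2 \otimes \mathbb{C}[t,t^{-1}] be the loop Lie algebra of sl_2 (with bracket [x\otimes t^m, y\otimes t^n] = [x,y]\otimes t^{m+n}), let N_- be the Lie subalgebra \mathbb{C}(e\otimes 1) + t^{-1}\mathbb{C}[t^{-1}]\otimes sl_2, and let B_0 = \mathbb{C}((t^{-1}+1)\otimes e) + (t^{-2}+t^{-1})\mathbb{C}[t^{-1}]\otimes sl_2. Then B_0 is a Lie ideal of N_-, and in the quotient Lie algebra L_0 = N_- /B_0 the classes T_+ = e\otimes 1 + B_0, T_- = f\otimes t^{-1} + B_0, T_0 = h\otimes t^{-1} + B_0 satisfy [T_0, T_+] = -2T_+, [T_0, T_-] = 2T_-, [T_+, T_-] = T_0. -/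
open TensorProduct LaurentPolynomial

/-- In the loop Lie algebra `sl₂ ⊗ ℂ[t,t⁻¹]`, the subspace
`B₀ = ℂ((t⁻¹+1)⊗e) + (t⁻²+t⁻¹)ℂ[t⁻¹] ⊗ sl₂` is a Lie ideal of the subalgebra
`N₋ = ℂ(e⊗1) + t⁻¹ℂ[t⁻¹] ⊗ sl₂`, and in the quotient `L₀ = N₋/B₀` the classes
`T₊ = e⊗1`, `T₋ = f⊗t⁻¹`, `T₀ = h⊗t⁻¹` satisfy
`[T₀,T₊] = -2T₊`, `[T₀,T₋] = 2T₋`, `[T₊,T₋] = T₀`. -/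
theorem loop_algebra_quotient_sl2 (L : Type*) [LieRing L] [LieAlgebra ℂ L] (e f h : L)
    (he : ⁅h, e⁆ = (2 : ℂ) • e) (hf : ⁅h, f⁆ = (-2 : ℂ) • f) (hef : ⁅e, f⁆ = h)
    (Nneg B0 : Submodule ℂ (LaurentPolynomial ℂ ⊗[ℂ] L))
    (hN : Nneg = Submodule.span ℂ
      ({(1 : LaurentPolynomial ℂ) ⊗ₜ[ℂ] e} ∪
        {p | ∃ (m : ℕ) (x : L), p = (T (-(m : ℤ) - 1)) ⊗ₜ[ℂ] x}))
    (hB : B0 = Submodule.span ℂ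
      ({((T (-1) + 1 : LaurentPolynomial ℂ)) ⊗ₜ[ℂ] e} ∪
        {p | ∃ (m : ℕ) (x : L),
          p = ((T (-(m : ℤ) - 2) + T (-(m : ℤ) - 1) : LaurentPolynomial ℂ)) ⊗ₜ[ℂ] x})) :
    B0 ≤ Nneg ∧
    (∀ x ∈ Nneg, ∀ y ∈ B0, ⁅x, y⁆ ∈ B0) ∧
    ⁅(T (-1) : LaurentPolynomial ℂ) ⊗ₜ[ℂ] h, (1 : LaurentPolynomial ℂ) ⊗ₜ[ℂ] e⁆
        + (2 : ℂ) • ((1 : LaurentPolynomial ℂ) ⊗ₜ[ℂ] e) ∈ B0 ∧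
    ⁅(T (-1) : LaurentPolynomial ℂ) ⊗ₜ[ℂ] h, (T (-1) : LaurentPolynomial ℂ) ⊗ₜ[ℂ] f⁆
        - (2 : ℂ) • ((T (-1) : LaurentPolynomial ℂ) ⊗ₜ[ℂ] f) ∈ B0 ∧
    ⁅(1 : LaurentPolynomial ℂ) ⊗ₜ[ℂ] e, (T (-1) : LaurentPolynomial ℂ) ⊗ₜ[ℂ] f⁆
        - (T (-1) : LaurentPolynomial ℂ) ⊗ₜ[ℂ] h ∈ B0 := by
  have tt : ∀ (s t : LaurentPolynomial ℂ) (x y : L),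
      ⁅s ⊗ₜ[ℂ] x, t ⊗ₜ[ℂ] y⁆ = (s * t) ⊗ₜ[ℂ] ⁅x, y⁆ := fun _ _ _ _ => rfl
  have ladd : ∀ x a b : LaurentPolynomial ℂ ⊗[ℂ] L,
      ⁅x, a + b⁆ = ⁅x, a⁆ + ⁅x, b⁆ := fun x a b => lie_add x a b
  have lsmul : ∀ (c : ℂ) (x a : LaurentPolynomial ℂ ⊗[ℂ] L),
      ⁅x, c • a⁆ = c • ⁅x, a⁆ := fun c x a => by
    have h1 : ⁅x, (algebraMap ℂ (LaurentPolynomial ℂ) c) • a⁆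
        = (algebraMap ℂ (LaurentPolynomial ℂ) c) • ⁅x, a⁆ := lie_smul (algebraMap ℂ (LaurentPolynomial ℂ) c) x a
    simpa only [algebraMap_smul] using h1
  have lzero : ∀ x : LaurentPolynomial ℂ ⊗[ℂ] L, ⁅x, (0 : LaurentPolynomial ℂ ⊗[ℂ] L)⁆ = 0 :=
    fun x => lie_zero x
  have addl : ∀ a b y : LaurentPolynomial ℂ ⊗[ℂ] L,
      ⁅a + b, y⁆ = ⁅a, y⁆ + ⁅b, y⁆ := fun a b y => add_lie a b y
  have smull : ∀ (c : ℂ) (a y : LaurentPolynomial ℂ ⊗[ℂ] L),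
      ⁅c • a, y⁆ = c • ⁅a, y⁆ := fun c a y => by
    have h1 : ⁅(algebraMap ℂ (LaurentPolynomial ℂ) c) • a, y⁆
        = (algebraMap ℂ (LaurentPolynomial ℂ) c) • ⁅a, y⁆ := smul_lie (algebraMap ℂ (LaurentPolynomial ℂ) c) a y
    simpa only [algebraMap_smul] using h1
  have zerol : ∀ y : LaurentPolynomial ℂ ⊗[ℂ] L, ⁅(0 : LaurentPolynomial ℂ ⊗[ℂ] L), y⁆ = 0 :=
    fun y => zero_lie y
  constructor
  · rw [hB, hN]
    apply Submodule.span_le.mpr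
    rintro p (rfl | ⟨m, x, rfl⟩) <;> rw [add_tmul]
    · exact add_mem (Submodule.subset_span (Or.inr ⟨0, e, by norm_num⟩))
        (Submodule.subset_span (Or.inl rfl))
    · refine add_mem (Submodule.subset_span (Or.inr ⟨m + 1, x, ?_⟩))
        (Submodule.subset_span (Or.inr ⟨m, x, rfl⟩))
      congr 2
      push_cast; ring
  refine ⟨?_, ?_, ?_, ?_⟩
  · intro x hx y hy
    rw [hN] at hx
    rw [hB] at hy ⊢
    induction hx using Submodule.span_induction with
    | mem x hxm =>
      induction hy using Submodule.span_induction with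
      | mem y hym =>
        rcases hxm with rfl | ⟨n, x', rfl⟩ <;> rcases hym with rfl | ⟨m, y', rfl⟩ <;>
          rw [tt]
        · rw [lie_self, tmul_zero]; exact Submodule.zero_mem _
        · rw [one_mul]
          exact Submodule.subset_span (Or.inr ⟨m, ⁅e, y'⁆, rfl⟩)
        · rw [mul_add, mul_one, ← T_add]
          refine Submodule.subset_span (Or.inr ⟨n, ⁅x', e⁆, ?_⟩)
          congr 3
          ring
        · rw [mul_add, ← T_add, ← T_add]
          refine Submodule.subset_span (Or.inr ⟨n + m + 1, ⁅x', y'⁆, ?_⟩)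
          congr 3 <;> push_cast <;> ring
      | zero => rw [lzero]; exact Submodule.zero_mem _
      | add a b _ _ ha hb => rw [ladd]; exact add_mem ha hb
      | smul c a _ ha => rw [lsmul]; exact Submodule.smul_mem _ _ ha
    | zero => rw [zerol]; exact Submodule.zero_mem _
    | add a b _ _ ha hb => rw [addl]; exact add_mem ha hb
    | smul c a _ ha => rw [smull]; exact Submodule.smul_mem _ _ ha
  · rw [hB, tt, mul_one, he, tmul_smul, ← smul_add, ← add_tmul]
    exact Submodule.smul_mem _ _ (Submodule.subset_span (Or.inl rfl))
  · rw [hB, tt, ← T_add, hf, tmul_smul]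
    have hq : (-2 : ℂ) • (T (-1 + -1) : LaurentPolynomial ℂ) ⊗ₜ[ℂ] f
        - (2 : ℂ) • (T (-1) : LaurentPolynomial ℂ) ⊗ₜ[ℂ] f
        = (-2 : ℂ) • (((T (-1 + -1) + T (-1)) : LaurentPolynomial ℂ) ⊗ₜ[ℂ] f) := by
      rw [add_tmul, smul_add, neg_smul, neg_smul, sub_eq_add_neg]
      norm_num
      exact neg_smul (2 : ℂ) ((T (-2) : LaurentPolynomial ℂ) ⊗ₜ[ℂ] f)
    rw [hq]
    refine Submodule.smul_mem _ _ (Submodule.subset_span (Or.inr ⟨0, f, ?_⟩))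
    norm_num
  · rw [hB, tt, one_mul, hef, sub_self]
    exact Submodule.zero_mem _
end
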